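/- Suppose p is non-negative and integrable on [a,b] with ∫_a^b p(t) dt > 0, and n ∈ ℕ is odd. Then there exists x ∈ [a,b] with ∫_a^b r_x^n(t) dt = 0; moreover, if p is positive almost everywhere on [a,b], then this x is unique. -/

import Mathlib

open MeasureTheory intervalIntegral

/-- The kernels `r_x^k`: `r_x^0 = p` and
`r_x^{k+1}(s) = −∫_a^s r_x^k` for `s ≤ x`, `∫_s^b r_x^k` for `s ≥ x`. -/
noncomputable def rk (a b x : ℝ) (p : ℝ → ℝ) : ℕ → ℝ → ℝ
  | 0 => p
  | k + 1 => fun s =>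
      if s ≤ x then -(∫ t in a..s, rk a b x p k t)
      else ∫ t in s..b, rk a b x p k t

/-- Left iterated primitives. -/
noncomputable def Lf (a : ℝ) (q : ℝ → ℝ) : ℕ → ℝ → ℝ
  | 0 => q
  | k + 1 => fun s => -(∫ t in a..s, Lf a q k t)

/-- Right iterated primitives. -/
noncomputable def Rf (b : ℝ) (q : ℝ → ℝ) : ℕ → ℝ → ℝ
  | 0 => q
  | k + 1 => fun s => ∫ t in s..b, Rf b q k t

lemma Lf_int {q : ℝ → ℝ} (hq : Integrable q volume) (a : ℝ) :
    ∀ k, ∀ c d : ℝ, IntervalIntegrable (Lf a q k) volume c d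
  | 0, _, _ => hq.intervalIntegrable
  | (k+1), c, d => by
      have hcont : Continuous (Lf a q (k+1)) := by
        show Continuous fun s => -(∫ t in a..s, Lf a q k t)
        exact (intervalIntegral.continuous_primitive (Lf_int hq a k) a).neg
      exact hcont.intervalIntegrable c d

lemma Lf_cont {q : ℝ → ℝ} (hq : Integrable q volume) (a : ℝ) (k : ℕ) :
    Continuous (Lf a q (k+1)) := by
  show Continuous fun s => -(∫ t in a..s, Lf a q k t)
  exact (intervalIntegral.continuous_primitive (Lf_int hq a k) a).neg

lemma Rf_int {q : ℝ → ℝ} (hq : Integrable q volume) (b : ℝ) :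
    ∀ k, ∀ c d : ℝ, IntervalIntegrable (Rf b q k) volume c d
  | 0, _, _ => hq.intervalIntegrable
  | (k+1), c, d => by
      have hcont : Continuous (Rf b q (k+1)) := by
        show Continuous fun s => ∫ t in s..b, Rf b q k t
        have heq : (fun s => ∫ t in s..b, Rf b q k t)
            = fun s => -(∫ t in b..s, Rf b q k t) := by
          funext s; rw [intervalIntegral.integral_symm]
        rw [heq]
        exact (intervalIntegral.continuous_primitive (Rf_int hq b k) b).neg
      exact hcont.intervalIntegrable c d

lemma Rf_cont {q : ℝ → ℝ} (hq : Integrable q volume) (b : ℝ) (k : ℕ) :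
    Continuous (Rf b q (k+1)) := by
  show Continuous fun s => ∫ t in s..b, Rf b q k t
  have heq : (fun s => ∫ t in s..b, Rf b q k t)
      = fun s => -(∫ t in b..s, Rf b q k t) := by
    funext s; rw [intervalIntegral.integral_symm]
  rw [heq]
  exact (intervalIntegral.continuous_primitive (Rf_int hq b k) b).neg

lemma rk_eq_Lf (a b x : ℝ) (q : ℝ → ℝ) (hax : a ≤ x) :
    ∀ k, ∀ s : ℝ, s ≤ x → rk a b x q k s = Lf a q k s
  | 0, _, _ => rfl
  | (k+1), s, hs => by
      show (if s ≤ x then -(∫ t in a..s, rk a b x q k t)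
        else ∫ t in s..b, rk a b x q k t) = -(∫ t in a..s, Lf a q k t)
      rw [if_pos hs]
      congr 1
      refine intervalIntegral.integral_congr fun t ht => ?_
      exact rk_eq_Lf a b x q hax k t (le_trans ht.2 (sup_le hax hs))

lemma rk_eq_Rf (a b x : ℝ) (q : ℝ → ℝ) (hxb : x ≤ b) :
    ∀ k, ∀ s : ℝ, x < s → s ≤ b → rk a b x q k s = Rf b q k s
  | 0, _, _, _ => rfl
  | (k+1), s, hxs, hsb => by
      show (if s ≤ x then -(∫ t in a..s, rk a b x q k t)
        else ∫ t in s..b, rk a b x q k t) = ∫ t in s..b, Rf b q k t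
      rw [if_neg (not_le.mpr hxs)]
      refine intervalIntegral.integral_congr fun t ht => ?_
      have h1 : s ≤ t := le_trans (le_inf le_rfl hsb) ht.1
      have h2 : t ≤ b := le_trans ht.2 (sup_le hsb le_rfl)
      exact rk_eq_Rf a b x q hxb k t (lt_of_lt_of_le hxs h1) h2

lemma rk_congr (a b x : ℝ) (p q : ℝ → ℝ) (hx : x ∈ Set.Icc a b)
    (hpq : ∀ t ∈ Set.Icc a b, p t = q t) :
    ∀ k, ∀ s ∈ Set.Icc a b, rk a b x p k s = rk a b x q k s
  | 0, s, hs => hpq s hs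
  | (k+1), s, hs => by
      have ha : a ∈ Set.Icc a b := ⟨le_refl a, le_trans hx.1 hx.2⟩
      have hb : b ∈ Set.Icc a b := ⟨le_trans hx.1 hx.2, le_refl b⟩
      show (if s ≤ x then -(∫ t in a..s, rk a b x p k t)
        else ∫ t in s..b, rk a b x p k t) =
        (if s ≤ x then -(∫ t in a..s, rk a b x q k t)
        else ∫ t in s..b, rk a b x q k t)
      split
      · congr 1
        refine intervalIntegral.integral_congr fun t ht => ?_
        exact rk_congr a b x p q hx hpq k t (Set.uIcc_subset_Icc ha hs ht)
      · refine intervalIntegral.integral_congr fun t ht => ?_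
        exact rk_congr a b x p q hx hpq k t (Set.uIcc_subset_Icc hs hb ht)

lemma Rf_nonneg {q : ℝ → ℝ} (hq0 : ∀ t, 0 ≤ q t) (b : ℝ) :
    ∀ k, ∀ s : ℝ, s ≤ b → 0 ≤ Rf b q k s
  | 0, s, _ => hq0 s
  | (k+1), s, hsb => by
      show 0 ≤ ∫ t in s..b, Rf b q k t
      exact intervalIntegral.integral_nonneg hsb fun t ht => Rf_nonneg hq0 b k t ht.2

lemma Lf_sign {q : ℝ → ℝ} (hq0 : ∀ t, 0 ≤ q t) (a : ℝ) :
    ∀ k, ∀ s : ℝ, a ≤ s → 0 ≤ (-1 : ℝ) ^ k * Lf a q k s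
  | 0, s, _ => by show 0 ≤ (-1 : ℝ) ^ 0 * q s; simpa using hq0 s
  | (k+1), s, has => by
      show 0 ≤ (-1 : ℝ) ^ (k+1) * -(∫ t in a..s, Lf a q k t)
      have : (-1 : ℝ) ^ (k+1) * -(∫ t in a..s, Lf a q k t)
          = ∫ t in a..s, (-1 : ℝ) ^ k * Lf a q k t := by
        rw [intervalIntegral.integral_const_mul]; ring
      rw [this]
      exact intervalIntegral.integral_nonneg has fun t ht => Lf_sign hq0 a k t ht.1

/-- Positivity of the integral of a nonnegative integrable function that is a.e. positive. -/
lemma integral_pos_of_ae_pos {q : ℝ → ℝ} (hq : Integrable q volume)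
    (hq0 : ∀ t, 0 ≤ q t) {c d : ℝ} (hcd : c < d)
    (hpos : ∀ᵐ t ∂(volume.restrict (Set.Ioc c d)), 0 < q t) :
    0 < ∫ t in c..d, q t := by
  by_contra h
  push_neg at h
  have h0 : (0:ℝ) ≤ ∫ t in c..d, q t :=
    intervalIntegral.integral_nonneg hcd.le fun t _ => hq0 t
  have hz : ∫ t in Set.Ioc c d, q t = 0 := by
    rw [intervalIntegral.integral_of_le hcd.le] at h h0
    linarith
  have hae : q =ᵐ[volume.restrict (Set.Ioc c d)] 0 :=
    (integral_eq_zero_iff_of_nonneg_ae (Filter.Eventually.of_forall fun t => hq0 t)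
      hq.integrableOn).mp hz
  have : ∀ᵐ t ∂(volume.restrict (Set.Ioc c d)), False := by
    filter_upwards [hpos, hae] with t h1 h2
    exact absurd h2 (ne_of_gt h1)
  have hbot : volume.restrict (Set.Ioc c d) = 0 :=
    MeasureTheory.ae_eq_bot.mp (Filter.eventually_false_iff_eq_bot.mp this)
  have := Measure.restrict_eq_zero.mp hbot
  rw [Real.volume_Ioc] at this
  simp only [ENNReal.ofReal_eq_zero] at this
  linarith

lemma Rf_pos {q : ℝ → ℝ} (hq : Integrable q volume) (hq0 : ∀ t, 0 ≤ q t)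
    {a b : ℝ} (hab : a ≤ b)
    (hpos : ∀ᵐ t ∂(volume.restrict (Set.Icc a b)), 0 < q t) :
    ∀ k, ∀ s : ℝ, a ≤ s → s < b → 0 < Rf b q (k+1) s
  | 0, s, has, hsb => by
      show 0 < ∫ t in s..b, q t
      refine integral_pos_of_ae_pos hq hq0 hsb ?_
      exact ae_restrict_of_ae_restrict_of_subset
        (Set.Ioc_subset_Icc_self.trans (Set.Icc_subset_Icc_left has)) hpos
  | (k+1), s, has, hsb => by
      show 0 < ∫ t in s..b, Rf b q (k+1) t
      refine intervalIntegral.intervalIntegral_pos_of_pos_on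
        ((Rf_cont hq b k).intervalIntegrable s b) (fun t ht => ?_) hsb
      exact Rf_pos hq hq0 hab hpos k t (le_trans has ht.1.le) ht.2

lemma Lf_neg {q : ℝ → ℝ} (hq : Integrable q volume) (hq0 : ∀ t, 0 ≤ q t)
    {a b : ℝ} (hab : a ≤ b)
    (hpos : ∀ᵐ t ∂(volume.restrict (Set.Icc a b)), 0 < q t) :
    ∀ k, ∀ s : ℝ, a < s → s ≤ b → 0 < (-1 : ℝ) ^ (k+1) * Lf a q (k+1) s
  | 0, s, has, hsb => by
      show 0 < (-1 : ℝ) ^ (0+1) * -(∫ t in a..s, q t)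
      have h1 : 0 < ∫ t in a..s, q t := by
        refine integral_pos_of_ae_pos hq hq0 has ?_
        exact ae_restrict_of_ae_restrict_of_subset
          (Set.Ioc_subset_Icc_self.trans (Set.Icc_subset_Icc_right hsb)) hpos
      simpa using h1
  | (k+1), s, has, hsb => by
      show 0 < (-1 : ℝ) ^ (k+1+1) * -(∫ t in a..s, Lf a q (k+1) t)
      have heq : (-1 : ℝ) ^ (k+1+1) * -(∫ t in a..s, Lf a q (k+1) t)
          = ∫ t in a..s, (-1 : ℝ) ^ (k+1) * Lf a q (k+1) t := by
        rw [intervalIntegral.integral_const_mul]; ring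
      rw [heq]
      refine intervalIntegral.intervalIntegral_pos_of_pos_on
        ((continuous_const.mul (Lf_cont hq a k)).intervalIntegrable a s) (fun t ht => ?_) has
      exact Lf_neg hq hq0 hab hpos k t ht.1 (le_trans ht.2.le hsb)

/-- If `p ≥ 0` is integrable on `[a,b]` with `∫_a^b p > 0` and `n` is odd, then there
exists `x ∈ [a,b]` with `∫_a^b r_x^n(t) dt = 0`; if moreover `p > 0` almost everywhere
on `[a,b]`, then this `x` is unique. -/
theorem stmt12 (a b : ℝ) (hab : a < b) (n : ℕ) (hno : Odd n)
    (p : ℝ → ℝ) (hp : IntervalIntegrable p volume a b)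
    (hp0 : ∀ t ∈ Set.Icc a b, 0 ≤ p t)
    (hppos : 0 < ∫ t in a..b, p t) :
    (∃ x ∈ Set.Icc a b, (∫ t in a..b, rk a b x p n t) = 0) ∧
    ((∀ᵐ t ∂(volume.restrict (Set.Icc a b)), 0 < p t) →
      ∃! x : ℝ, x ∈ Set.Icc a b ∧ (∫ t in a..b, rk a b x p n t) = 0) := by
  -- replace p by its indicator extension q
  set q : ℝ → ℝ := (Set.Icc a b).indicator p with hq_def
  have hq : Integrable q volume := by
    rw [hq_def, integrable_indicator_iff measurableSet_Icc]
    exact (integrableOn_Icc_iff_integrableOn_Ioc).mpr hp.1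
  have hq0 : ∀ t, 0 ≤ q t := by
    intro t
    by_cases h : t ∈ Set.Icc a b
    · rw [hq_def, Set.indicator_of_mem h]; exact hp0 t h
    · rw [hq_def, Set.indicator_of_notMem h]
  have hpq : ∀ t ∈ Set.Icc a b, p t = q t := fun t ht => by
    rw [hq_def, Set.indicator_of_mem ht]
  -- n = k + 1
  obtain ⟨k, rfl⟩ : ∃ k, n = k + 1 := by
    rcases n with _ | k
    · exact absurd hno (by simp)
    · exact ⟨k, rfl⟩
  -- the function G
  set G : ℝ → ℝ := fun x =>
    (∫ s in a..x, Lf a q (k+1) s) + (∫ s in x..b, Rf b q (k+1) s) with hG_def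
  -- key identity
  have key : ∀ x ∈ Set.Icc a b, (∫ t in a..b, rk a b x p (k+1) t) = G x := by
    intro x hx
    have h1 : (∫ t in a..b, rk a b x p (k+1) t) = ∫ t in a..b, rk a b x q (k+1) t := by
      refine intervalIntegral.integral_congr fun s hs => ?_
      exact rk_congr a b x p q hx hpq (k+1) s
        (Set.uIcc_subset_Icc (Set.left_mem_Icc.mpr hab.le) (Set.right_mem_Icc.mpr hab.le) hs)
    have i1 : IntervalIntegrable (rk a b x q (k+1)) volume a x := by
      rw [intervalIntegrable_iff_integrableOn_Ioc_of_le hx.1]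
      refine (((Lf_cont hq a k).intervalIntegrable a x).1).congr_fun
        (fun s hs => ?_) measurableSet_Ioc
      exact (rk_eq_Lf a b x q hx.1 (k+1) s hs.2).symm
    have i2 : IntervalIntegrable (rk a b x q (k+1)) volume x b := by
      rw [intervalIntegrable_iff_integrableOn_Ioc_of_le hx.2]
      refine (((Rf_cont hq b k).intervalIntegrable x b).1).congr_fun
        (fun s hs => ?_) measurableSet_Ioc
      exact (rk_eq_Rf a b x q hx.2 (k+1) s hs.1 hs.2).symm
    have hsplit : (∫ t in a..b, rk a b x q (k+1) t)
        = (∫ s in a..x, rk a b x q (k+1) s) + ∫ s in x..b, rk a b x q (k+1) s :=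
      (intervalIntegral.integral_add_adjacent_intervals i1 i2).symm
    have e1 : (∫ s in a..x, rk a b x q (k+1) s) = ∫ s in a..x, Lf a q (k+1) s := by
      refine intervalIntegral.integral_congr fun s hs => ?_
      rw [Set.uIcc_of_le hx.1] at hs
      exact rk_eq_Lf a b x q hx.1 (k+1) s hs.2
    have e2 : (∫ s in x..b, rk a b x q (k+1) s) = ∫ s in x..b, Rf b q (k+1) s := by
      rw [intervalIntegral.integral_of_le hx.2, intervalIntegral.integral_of_le hx.2]
      exact setIntegral_congr_fun measurableSet_Ioc
        (fun s hs => rk_eq_Rf a b x q hx.2 (k+1) s hs.1 hs.2)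
    rw [h1, hsplit, e1, e2]
  -- continuity of G
  have hGcont : Continuous G := by
    rw [hG_def]
    refine (intervalIntegral.continuous_primitive (Lf_int hq a (k+1)) a).add ?_
    have heq : (fun x => ∫ s in x..b, Rf b q (k+1) s)
        = fun x => -(∫ s in b..x, Rf b q (k+1) s) := by
      funext x; rw [intervalIntegral.integral_symm]
    rw [heq]
    exact (intervalIntegral.continuous_primitive (Rf_int hq b (k+1)) b).neg
  -- sign of (-1)^(k+1)
  have hodd : Odd (k+1) := hno
  have hneg1 : ((-1 : ℝ)) ^ (k+1) = -1 := hodd.neg_one_pow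
  -- G a ≥ 0
  have hGa : 0 ≤ G a := by
    have : G a = ∫ s in a..b, Rf b q (k+1) s := by
      rw [hG_def]; simp [intervalIntegral.integral_same]
    rw [this]
    exact intervalIntegral.integral_nonneg hab.le fun t ht => Rf_nonneg hq0 b (k+1) t ht.2
  -- G b ≤ 0
  have hGb : G b ≤ 0 := by
    have hGbeq : G b = ∫ s in a..b, Lf a q (k+1) s := by
      rw [hG_def]; simp [intervalIntegral.integral_same]
    have hn : 0 ≤ ∫ s in a..b, -Lf a q (k+1) s := by
      refine intervalIntegral.integral_nonneg hab.le fun t ht => ?_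
      have := Lf_sign hq0 a (k+1) t ht.1
      rw [hneg1] at this
      linarith
    rw [intervalIntegral.integral_neg] at hn
    rw [hGbeq]; linarith
  -- existence
  have hex : ∃ x ∈ Set.Icc a b, G x = 0 := by
    have h0mem : (0:ℝ) ∈ Set.Icc (G b) (G a) := ⟨hGb, hGa⟩
    have := intermediate_value_Icc' hab.le hGcont.continuousOn h0mem
    obtain ⟨x, hx, hGx⟩ := this
    exact ⟨x, hx, hGx⟩
  obtain ⟨x₀, hx₀, hGx₀⟩ := hex
  constructor
  · exact ⟨x₀, hx₀, (key x₀ hx₀).trans hGx₀⟩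
  · intro hposp
    -- q positive a.e. on Icc a b
    have hqpos : ∀ᵐ t ∂(volume.restrict (Set.Icc a b)), 0 < q t := by
      have hmem : ∀ᵐ t ∂(volume.restrict (Set.Icc a b)), t ∈ Set.Icc a b :=
        ae_restrict_mem measurableSet_Icc
      filter_upwards [hposp, hmem] with t h1 h2
      rwa [hq_def, Set.indicator_of_mem h2]
    -- strict antitonicity of G on Icc a b
    have hmono : ∀ x ∈ Set.Icc a b, ∀ y ∈ Set.Icc a b, x < y → G y < G x := by
      intro x hx y hy hxy
      have hL1 : (∫ s in a..y, Lf a q (k+1) s)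
          = (∫ s in a..x, Lf a q (k+1) s) + ∫ s in x..y, Lf a q (k+1) s :=
        (intervalIntegral.integral_add_adjacent_intervals
          (Lf_int hq a (k+1) a x) (Lf_int hq a (k+1) x y)).symm
      have hR1 : (∫ s in x..b, Rf b q (k+1) s)
          = (∫ s in x..y, Rf b q (k+1) s) + ∫ s in y..b, Rf b q (k+1) s :=
        (intervalIntegral.integral_add_adjacent_intervals
          (Rf_int hq b (k+1) x y) (Rf_int hq b (k+1) y b)).symm
      have hdiff : G x - G y
          = ∫ s in x..y, (Rf b q (k+1) s - Lf a q (k+1) s) := by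
        rw [intervalIntegral.integral_sub
          (Rf_int hq b (k+1) x y) (Lf_int hq a (k+1) x y)]
        rw [hG_def]
        simp only
        rw [hL1, hR1]; ring
      have hpos' : 0 < ∫ s in x..y, (Rf b q (k+1) s - Lf a q (k+1) s) := by
        refine intervalIntegral.intervalIntegral_pos_of_pos_on
          (((Rf_cont hq b k).sub (Lf_cont hq a k)).intervalIntegrable x y)
          (fun t ht => ?_) hxy
        have ht1 : a < t := lt_of_le_of_lt hx.1 ht.1
        have ht2 : t < b := lt_of_lt_of_le ht.2 hy.2
        have hR := Rf_nonneg hq0 b (k+1) t ht2.le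
        have hL := Lf_neg hq hq0 hab.le hqpos k t ht1 ht2.le
        rw [hneg1] at hL
        linarith
      linarith
    refine ⟨x₀, ⟨hx₀, (key x₀ hx₀).trans hGx₀⟩, ?_⟩
    rintro y ⟨hy, hy0⟩
    have hGy : G y = 0 := (key y hy).symm.trans hy0
    by_contra hne
    rcases lt_or_gt_of_ne hne with h | h
    · have := hmono y hy x₀ hx₀ h
      rw [hGy, hGx₀] at this; exact lt_irrefl 0 this
    · have := hmono x₀ hx₀ y hy h
      rw [hGy, hGx₀] at this; exact lt_irrefl 0 this
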